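/- Let m ≥ 0, α, β ∈ ℝ, M₀ ≥ 1; let û, v̂ : ℝ → ℂ be C¹ functions along a characteristic with |û|, |v̂| ≤ M₀ satisfying û'(s) = i m v̂(s) + i N₁(û(s), v̂(s)) where N₁(u,v) = α u|v|² + 2β(conj(u)v + u·conj(v))v, and let u : ℝ → ℂ be constant (u'(s) = 0). Set Ũ(s) = û(s) - u. Then d/ds |Ũ(s)|² ≤ 2|Ũ(s)|² + 2(m + |α| + 4|β|)²·M₀⁶, and hence for s ∈ [0,τ]: |Ũ(s)|² ≤ exp(2s)·(|Ũ(0)|² + 2(m+|α|+4|β|)²·M₀⁶·s). -/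

import Mathlib

theorem stmt12 (m α β M₀ τ : ℝ) (hm : 0 ≤ m) (hM₀ : 1 ≤ M₀) (hτ : 0 < τ)
    (uh vh u : ℝ → ℂ)
    (hbu : ∀ s, ‖uh s‖ ≤ M₀) (hbv : ∀ s, ‖vh s‖ ≤ M₀)
    (hode : ∀ s, HasDerivAt uh
      (Complex.I * m * vh s
        + Complex.I * (α * uh s * ((‖vh s‖ : ℂ))^2
          + 2 * β * ((starRingEnd ℂ) (uh s) * vh s + uh s * (starRingEnd ℂ) (vh s)) * vh s)) s)
    (hconst : ∀ s, HasDerivAt u 0 s) :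
    (∀ s, deriv (fun t => ‖uh t - u t‖^2) s
        ≤ 2 * ‖uh s - u s‖^2 + 2 * (m + |α| + 4 * |β|)^2 * M₀^6)
    ∧ (∀ s ∈ Set.Icc (0:ℝ) τ,
        ‖uh s - u s‖^2
          ≤ Real.exp (2 * s) * (‖uh 0 - u 0‖^2 + 2 * (m + |α| + 4 * |β|)^2 * M₀^6 * s)) := by
  set C : ℝ := (m + |α| + 4 * |β|) * M₀ ^ 3 with hC
  have hM0 : (0:ℝ) ≤ M₀ := le_trans zero_le_one hM₀
  have hCnn : 0 ≤ C := by positivity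
  set F : ℝ → ℂ := fun s => Complex.I * m * vh s
    + Complex.I * (α * uh s * ((‖vh s‖ : ℂ))^2
      + 2 * β * ((starRingEnd ℂ) (uh s) * vh s + uh s * (starRingEnd ℂ) (vh s)) * vh s) with hF
  have hw : ∀ s, HasDerivAt (fun t => uh t - u t) (F s) s := by
    intro s
    exact ((hode s).sub (hconst s)).congr_deriv (sub_zero _)
  have hFb : ∀ s, ‖F s‖ ≤ C := by
    intro s
    have h1 : ‖Complex.I * (m:ℂ) * vh s‖ ≤ m * M₀ := by
      rw [norm_mul, norm_mul, Complex.norm_I, one_mul, Complex.norm_real,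
        Real.norm_eq_abs, abs_of_nonneg hm]
      exact mul_le_mul_of_nonneg_left (hbv s) hm
    have h2 : ‖(α:ℂ) * uh s * ((‖vh s‖ : ℂ))^2‖ ≤ |α| * M₀ ^ 3 := by
      rw [norm_mul, norm_mul, norm_pow, Complex.norm_real, Complex.norm_real,
        Real.norm_eq_abs, Real.norm_eq_abs, abs_of_nonneg (norm_nonneg _)]
      have h := hbu s; have h' := hbv s
      have hM3 : M₀ ^ 3 = M₀ * M₀ ^ 2 := by ring
      rw [hM3]
      have hv2 : ‖vh s‖ ^ 2 ≤ M₀ ^ 2 := by nlinarith [norm_nonneg (vh s)]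
      have : ‖uh s‖ * ‖vh s‖ ^ 2 ≤ M₀ * M₀ ^ 2 :=
        mul_le_mul h hv2 (by positivity) hM0
      calc |α| * ‖uh s‖ * ‖vh s‖ ^ 2 = |α| * (‖uh s‖ * ‖vh s‖ ^ 2) := by ring
        _ ≤ |α| * (M₀ * M₀ ^ 2) := mul_le_mul_of_nonneg_left this (abs_nonneg α)
        _ = |α| * (M₀ * M₀ ^ 2) := by ring
    have h3 : ‖(2:ℂ) * β * ((starRingEnd ℂ) (uh s) * vh s + uh s * (starRingEnd ℂ) (vh s)) * vh s‖
        ≤ 4 * |β| * M₀ ^ 3 := by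
      have hsum : ‖(starRingEnd ℂ) (uh s) * vh s + uh s * (starRingEnd ℂ) (vh s)‖
          ≤ 2 * (M₀ * M₀) := by
        refine (norm_add_le _ _).trans ?_
        rw [norm_mul, norm_mul, RCLike.norm_conj, RCLike.norm_conj]
        nlinarith [hbu s, hbv s, norm_nonneg (uh s), norm_nonneg (vh s)]
      rw [norm_mul, norm_mul, norm_mul, Complex.norm_real, Real.norm_eq_abs]
      have h2n : ‖(2:ℂ)‖ = 2 := by norm_num
      rw [h2n]
      have hv := hbv s
      have hnn := norm_nonneg ((starRingEnd ℂ) (uh s) * vh s + uh s * (starRingEnd ℂ) (vh s))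
      have hstep : ‖(starRingEnd ℂ) (uh s) * vh s + uh s * (starRingEnd ℂ) (vh s)‖ * ‖vh s‖
          ≤ 2 * (M₀ * M₀) * M₀ :=
        mul_le_mul hsum hv (norm_nonneg _) (by positivity)
      calc 2 * |β| * ‖(starRingEnd ℂ) (uh s) * vh s + uh s * (starRingEnd ℂ) (vh s)‖ * ‖vh s‖
          = 2 * |β| * (‖(starRingEnd ℂ) (uh s) * vh s + uh s * (starRingEnd ℂ) (vh s)‖ * ‖vh s‖) := by
            ring
        _ ≤ 2 * |β| * (2 * (M₀ * M₀) * M₀) := by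
            exact mul_le_mul_of_nonneg_left hstep (by positivity)
        _ = 4 * |β| * M₀ ^ 3 := by ring
    calc ‖F s‖ ≤ ‖Complex.I * (m:ℂ) * vh s‖
          + ‖Complex.I * ((α:ℂ) * uh s * ((‖vh s‖ : ℂ))^2
            + (2:ℂ) * β * ((starRingEnd ℂ) (uh s) * vh s + uh s * (starRingEnd ℂ) (vh s)) * vh s)‖ :=
        norm_add_le _ _
      _ = ‖Complex.I * (m:ℂ) * vh s‖
          + ‖(α:ℂ) * uh s * ((‖vh s‖ : ℂ))^2
            + (2:ℂ) * β * ((starRingEnd ℂ) (uh s) * vh s + uh s * (starRingEnd ℂ) (vh s)) * vh s‖ := by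
        congr 1
        rw [norm_mul, Complex.norm_I, one_mul]
      _ ≤ m * M₀ + (|α| * M₀ ^ 3 + 4 * |β| * M₀ ^ 3) :=
        add_le_add h1 ((norm_add_le _ _).trans (add_le_add h2 h3))
      _ ≤ C := by
        rw [hC]
        have hM3 : M₀ ≤ M₀ ^ 3 := by
          nlinarith [mul_nonneg (mul_nonneg hM0 (sub_nonneg.2 hM₀))
            (by linarith : (0:ℝ) ≤ M₀ + 1)]
        nlinarith [abs_nonneg α, abs_nonneg β]
  constructor
  · intro s
    have hre : HasDerivAt (fun t => (uh t - u t).re) ((F s).re) s :=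
      (Complex.reCLM.hasFDerivAt.comp_hasDerivAt s (hw s))
    have him : HasDerivAt (fun t => (uh t - u t).im) ((F s).im) s :=
      (Complex.imCLM.hasFDerivAt.comp_hasDerivAt s (hw s))
    have hg : HasDerivAt (fun t => ‖uh t - u t‖^2)
        (2 * (uh s - u s).re * (F s).re + 2 * (uh s - u s).im * (F s).im) s := by
      have : HasDerivAt (fun t => (uh t - u t).re^2 + (uh t - u t).im^2)
          (2 * (uh s - u s).re * (F s).re + 2 * (uh s - u s).im * (F s).im) s := by
        have h1 := (hre.pow 2).add (him.pow 2)
        exact h1.congr_deriv (by norm_num)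
      refine this.congr_of_eventuallyEq (Filter.Eventually.of_forall fun t => ?_)
      show ‖uh t - u t‖ ^ 2 = (uh t - u t).re ^ 2 + (uh t - u t).im ^ 2
      rw [Complex.sq_norm, Complex.normSq_apply]; ring
    rw [hg.deriv]
    have hn2 : ‖uh s - u s‖^2 = (uh s - u s).re^2 + (uh s - u s).im^2 := by
      rw [Complex.sq_norm, Complex.normSq_apply]; ring
    have hF2 : (F s).re^2 + (F s).im^2 ≤ C^2 := by
      have : ‖F s‖^2 ≤ C^2 := by
        have := hFb s; nlinarith [norm_nonneg (F s)]
      calc (F s).re^2 + (F s).im^2 = ‖F s‖^2 := by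
            rw [Complex.sq_norm, Complex.normSq_apply]; ring
        _ ≤ C^2 := this
    have hCsq : C^2 = (m + |α| + 4 * |β|)^2 * M₀^6 := by rw [hC]; ring
    rw [hn2]
    nlinarith [hCsq, hF2, sq_nonneg ((uh s - u s).re - (F s).re),
      sq_nonneg ((uh s - u s).im - (F s).im),
      sq_nonneg (uh s - u s).re, sq_nonneg (uh s - u s).im]
  · intro s hs
    obtain ⟨hs0, hsτ⟩ := hs
    have hgron := norm_le_gronwallBound_of_norm_deriv_right_le
      (f := fun t => uh t - u t) (f' := F) (δ := ‖uh 0 - u 0‖) (K := 0) (ε := C) (a := 0) (b := τ)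
      (fun t _ => ((hw t).continuousAt).continuousWithinAt)
      (fun t _ => (hw t).hasDerivWithinAt)
      le_rfl
      (fun t _ => by simpa using hFb t)
      s ⟨hs0, hsτ⟩
    rw [gronwallBound_K0, sub_zero] at hgron
    have hgron' : ‖uh s - u s‖ ≤ ‖uh 0 - u 0‖ + C * s := hgron
    have hwn : (0:ℝ) ≤ ‖uh s - u s‖ := norm_nonneg _
    have hδ : (0:ℝ) ≤ ‖uh 0 - u 0‖ := norm_nonneg _
    have hexp : 0 ≤ Real.exp (2 * s) - (1 + 2 * s) := by
      linarith [Real.add_one_le_exp (2 * s)]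
    have hCsq : C^2 = (m + |α| + 4 * |β|)^2 * M₀^6 := by rw [hC]; ring
    have hsq : ‖uh s - u s‖^2 ≤ (‖uh 0 - u 0‖ + C * s)^2 := by
      nlinarith
    have hmain : (‖uh 0 - u 0‖ + C * s)^2
        ≤ Real.exp (2 * s) * (‖uh 0 - u 0‖^2 + 2 * C^2 * s) := by
      nlinarith [mul_nonneg hs0 (sq_nonneg (‖uh 0 - u 0‖ - C)),
        mul_nonneg hexp (sq_nonneg ‖uh 0 - u 0‖),
        mul_nonneg hexp (mul_nonneg (mul_nonneg (by norm_num : (0:ℝ) ≤ 2) (sq_nonneg C)) hs0),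
        mul_nonneg (mul_nonneg hs0 hs0) (sq_nonneg C)]
    calc ‖uh s - u s‖^2 ≤ Real.exp (2 * s) * (‖uh 0 - u 0‖^2 + 2 * C^2 * s) :=
          le_trans hsq hmain
      _ = Real.exp (2 * s) * (‖uh 0 - u 0‖^2 + 2 * (m + |α| + 4 * |β|)^2 * M₀^6 * s) := by
          rw [hCsq]; ring
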